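/- Fix n ≥ 1, λ₀ > 0, ρ > 0, and set ξ = (2n+1)(2λ₀)^{2n}, λ = λ₀ + ρ e^{iπ/(4n+2)}. Then for Θ(ξ, λ) = 2i(−ξλ + 2^{2n}λ^{2n+1}) (the phase with n even), one has Re Θ(ξ, λ) = −2^{2n+1} ∑_{k=2}^{2n+1} C(2n+1, k) λ₀^{2n+1−k} ρ^k sin(kπ/(4n+2)) ≤ −2^{2n+1} ρ^{2n+1}, where C(m,k) denotes the binomial coefficient. -/

import Mathlib

open Real

/-- Phase decay along the deformed ray from the stationary point `λ₀`: with
`ξ = (2n+1)(2λ₀)^{2n}` and `λ = λ₀ + ρ e^{iπ/(4n+2)}`, the phase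
`Θ(ξ,λ) = 2i(−ξλ + 2^{2n}λ^{2n+1})` satisfies
`Re Θ = −2^{2n+1} ∑_{k=2}^{2n+1} C(2n+1,k) λ₀^{2n+1−k} ρ^k sin(kπ/(4n+2))
      ≤ −2^{2n+1} ρ^{2n+1}`. -/
theorem phase_decay_deformed_ray (n : ℕ) (hn : 1 ≤ n)
    (lam₀ : ℝ) (hlam₀ : 0 < lam₀) (ρ : ℝ) (hρ : 0 < ρ)
    (ξ : ℝ) (hξ : ξ = (2 * n + 1) * (2 * lam₀) ^ (2 * n))
    (lam : ℂ) (hlam : lam = (lam₀ : ℂ) + (ρ : ℂ) * Complex.exp (Complex.I * π / (4 * n + 2)))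
    (Θ : ℂ) (hΘ : Θ = 2 * Complex.I *
      (-(ξ : ℂ) * lam + (2 : ℂ) ^ (2 * n) * lam ^ (2 * n + 1))) :
    Θ.re = -(2 : ℝ) ^ (2 * n + 1) *
        ∑ k ∈ Finset.Icc 2 (2 * n + 1),
          (Nat.choose (2 * n + 1) k : ℝ) * lam₀ ^ (2 * n + 1 - k) * ρ ^ k
            * Real.sin (k * π / (4 * n + 2)) ∧
    Θ.re ≤ -(2 : ℝ) ^ (2 * n + 1) * ρ ^ (2 * n + 1) := by
  have hden : (0:ℝ) < 4 * n + 2 := by positivity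
  set θ : ℝ := π / (4 * n + 2) with hθdef
  have hexp : Complex.I * π / (4 * n + 2) = (θ : ℂ) * Complex.I := by
    rw [hθdef]
    push_cast
    ring
  -- binomial expansion
  have hbin : lam ^ (2*n+1) = ∑ k ∈ Finset.range (2*n+2),
      ((ρ:ℂ) * Complex.exp ((θ:ℂ) * Complex.I)) ^ k * (lam₀:ℂ) ^ (2*n+1-k)
        * (Nat.choose (2*n+1) k : ℂ) := by
    rw [hlam, hexp, add_comm, add_pow]
  have hterm : ∀ k : ℕ,
      (((ρ:ℂ) * Complex.exp ((θ:ℂ) * Complex.I)) ^ k * (lam₀:ℂ) ^ (2*n+1-k)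
        * (Nat.choose (2*n+1) k : ℂ)).im
      = (Nat.choose (2*n+1) k : ℝ) * lam₀ ^ (2*n+1-k) * ρ ^ k * Real.sin (k * θ) := by
    intro k
    have h1 : ((ρ:ℂ) * Complex.exp ((θ:ℂ) * Complex.I)) ^ k * (lam₀:ℂ) ^ (2*n+1-k)
        * (Nat.choose (2*n+1) k : ℂ)
        = (((Nat.choose (2*n+1) k : ℝ) * lam₀ ^ (2*n+1-k) * ρ ^ k : ℝ) : ℂ)
            * Complex.exp ((↑(k * θ) : ℂ) * Complex.I) := by
      rw [mul_pow, ← Complex.exp_nat_mul]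
      push_cast
      ring
    rw [h1, Complex.mul_im, Complex.ofReal_re, Complex.ofReal_im,
      Complex.exp_ofReal_mul_I_im]
    ring
  have himsum : (lam ^ (2*n+1)).im = ∑ k ∈ Finset.range (2*n+2),
      (Nat.choose (2*n+1) k : ℝ) * lam₀ ^ (2*n+1-k) * ρ ^ k * Real.sin (k * θ) := by
    rw [hbin, Complex.im_sum]
    exact Finset.sum_congr rfl fun k _ => hterm k
  have hlamim : lam.im = ρ * Real.sin θ := by
    rw [hlam, hexp]
    simp [Complex.add_im, Complex.mul_im, Complex.exp_ofReal_mul_I_im, Complex.exp_ofReal_mul_I_re]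
  have hre : Θ.re = 2 * ξ * lam.im - 2 ^ (2*n+1) * (lam ^ (2*n+1)).im := by
    rw [hΘ]
    simp only [Complex.mul_re, Complex.mul_im, Complex.add_re, Complex.add_im,
      Complex.neg_re, Complex.neg_im, Complex.I_re, Complex.I_im,
      Complex.ofReal_re, Complex.ofReal_im]
    rw [show ((2:ℂ) ^ (2*n)) = (((2:ℝ) ^ (2*n) : ℝ) : ℂ) from by push_cast; ring]
    simp only [Complex.ofReal_re, Complex.ofReal_im, Complex.re_ofNat, Complex.im_ofNat]
    ring
  -- split the sum
  have hset : Finset.range (2*n+2) = insert 0 (insert 1 (Finset.Icc 2 (2*n+1))) := by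
    ext k; simp [Finset.mem_Icc, Finset.mem_range]; omega
  set S : ℝ := ∑ k ∈ Finset.Icc 2 (2*n+1),
      (Nat.choose (2*n+1) k : ℝ) * lam₀ ^ (2*n+1-k) * ρ ^ k * Real.sin (k * θ) with hS
  have hsplit : ∑ k ∈ Finset.range (2*n+2),
      (Nat.choose (2*n+1) k : ℝ) * lam₀ ^ (2*n+1-k) * ρ ^ k * Real.sin (k * θ)
      = (2*n+1 : ℝ) * lam₀ ^ (2*n) * ρ * Real.sin θ + S := by
    rw [hset, Finset.sum_insert (by simp), Finset.sum_insert (by simp)]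
    simp only [Nat.cast_zero, zero_mul, Real.sin_zero, mul_zero, zero_add,
      Nat.choose_one_right, Nat.cast_one, one_mul, pow_one, Nat.add_sub_cancel, ← hS]
    push_cast
    ring
  have hreq : Θ.re = -(2:ℝ) ^ (2*n+1) * S := by
    rw [hre, himsum, hsplit, hlamim, hξ]
    rw [mul_pow]
    ring
  have hsin_eq : ∀ k : ℕ, (k : ℝ) * θ = k * π / (4 * n + 2) := by
    intro k; rw [hθdef]; ring
  constructor
  · rw [hreq, hS]
    congr 1
    exact Finset.sum_congr rfl fun k _ => by rw [hsin_eq]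
  · rw [hreq]
    have hS_ge : ρ ^ (2*n+1) ≤ S := by
      have hmem : 2*n+1 ∈ Finset.Icc 2 (2*n+1) := by
        simp [Finset.mem_Icc]; omega
      have hlast : (Nat.choose (2*n+1) (2*n+1) : ℝ) * lam₀ ^ (2*n+1-(2*n+1)) * ρ ^ (2*n+1)
          * Real.sin ((2*n+1 : ℕ) * θ) = ρ ^ (2*n+1) := by
        have harg : ((2*n+1 : ℕ) : ℝ) * θ = π / 2 := by
          rw [hθdef]
          field_simp
          push_cast; ring
        rw [harg, Real.sin_pi_div_two, Nat.choose_self, Nat.sub_self]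
        simp
      calc ρ ^ (2*n+1) = _ := hlast.symm
        _ ≤ S := by
          apply Finset.single_le_sum (f := fun k =>
            (Nat.choose (2*n+1) k : ℝ) * lam₀ ^ (2*n+1-k) * ρ ^ k * Real.sin (k * θ)) _ hmem
          intro k hk
          simp only [Finset.mem_Icc] at hk
          have hsin : 0 ≤ Real.sin (k * θ) := by
            apply Real.sin_nonneg_of_nonneg_of_le_pi
            · rw [hθdef]; positivity
            · rw [hθdef]
              have hk' : (k:ℝ) ≤ 4*n+2 := by
                have : k ≤ 4*n+2 := by omega
                exact_mod_cast this
              calc (k:ℝ) * (π/(4*n+2)) ≤ (4*(n:ℝ)+2) * (π/(4*n+2)) :=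
                    mul_le_mul_of_nonneg_right hk' (by positivity)
                _ = π := by field_simp
          positivity
    nlinarith [pow_pos (by norm_num : (0:ℝ) < 2) (2*n+1)]
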